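/- The number of pairs {t, s} with t ≠ s and φ(t) = φ(s), where φ(t) = (t^d, (t-1)^(d-1)), is exactly (d-1)(d-2)/2. -/

import Mathlib

open Polynomial

open scoped Classical in
noncomputable def rootPair (d : ℕ) : Finset (ℂ × ℂ) :=
  ((nthRootsFinset d (1 : ℂ)).erase 1) ×ˢ ((nthRootsFinset (d - 1) (1 : ℂ)).erase 1)

noncomputable def solFn : ℂ × ℂ → ℂ × ℂ :=
  fun p => ((1 - p.2) / (p.1 - p.2), p.1 * ((1 - p.2) / (p.1 - p.2)))

open scoped Classical in
noncomputable def solT (d : ℕ) : Finset (ℂ × ℂ) := (rootPair d).image solFn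

lemma mem_rootPair {d : ℕ} (hd : 2 ≤ d) {ξ η : ℂ} :
    (ξ, η) ∈ rootPair d ↔ (ξ ^ d = 1 ∧ ξ ≠ 1) ∧ (η ^ (d - 1) = 1 ∧ η ≠ 1) := by
  classical
  simp only [rootPair, Finset.mem_product, Finset.mem_erase,
    Polynomial.mem_nthRootsFinset (show 0 < d by omega),
    Polynomial.mem_nthRootsFinset (show 0 < d - 1 by omega)]
  tauto

lemma ne_of_mem_rootPair {d : ℕ} (hd : 2 ≤ d) {ξ η : ℂ}
    (h : (ξ, η) ∈ rootPair d) : ξ ≠ η := by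
  rw [mem_rootPair hd] at h
  rintro rfl
  apply h.1.2
  have : ξ ^ d = ξ ^ (d - 1) * ξ := by
    rw [← pow_succ]; congr 1; omega
  rw [h.1.1, h.2.1, one_mul] at this
  exact this.symm

lemma mem_solT {d : ℕ} (hd : 2 ≤ d) {a b : ℂ} :
    (a, b) ∈ solT d ↔
      a ≠ b ∧ a ^ d = b ^ d ∧ (a - 1) ^ (d - 1) = (b - 1) ^ (d - 1) := by
  classical
  constructor
  · intro h
    simp only [solT, Finset.mem_image] at h
    obtain ⟨⟨ξ, η⟩, hmem, heq⟩ := h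
    have hne := ne_of_mem_rootPair hd hmem
    rw [mem_rootPair hd] at hmem
    obtain ⟨⟨hξd, hξ1⟩, hηd, hη1⟩ := hmem
    set t : ℂ := (1 - η) / (ξ - η) with ht
    have hξη : ξ - η ≠ 0 := sub_ne_zero.mpr hne
    have h1η : (1 : ℂ) - η ≠ 0 := sub_ne_zero.mpr (Ne.symm hη1)
    have ht0 : t ≠ 0 := div_ne_zero h1η hξη
    have hteq : t * (ξ - η) = 1 - η := div_mul_cancel₀ _ hξη
    have hst : ξ * t - 1 = η * (t - 1) := by linear_combination hteq
    have hab : a = t ∧ b = ξ * t := by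
      simp only [solFn] at heq
      exact ⟨congrArg Prod.fst heq |>.symm, congrArg Prod.snd heq |>.symm⟩
    obtain ⟨rfl, rfl⟩ := hab
    refine ⟨?_, ?_, ?_⟩
    · intro h
      apply hξ1
      have : (ξ - 1) * t = 0 := by linear_combination -h
      rcases mul_eq_zero.mp this with h' | h'
      · exact sub_eq_zero.mp h'
      · exact absurd h' ht0
    · rw [mul_pow, hξd, one_mul]
    · rw [show ξ * t - 1 = η * (t - 1) from hst, mul_pow, hηd, one_mul]
  · rintro ⟨hab, hpow, hpow1⟩
    have hd0 : d ≠ 0 := by omega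
    have hd1 : d - 1 ≠ 0 := by omega
    have ha0 : a ≠ 0 := by
      rintro rfl
      rw [zero_pow hd0] at hpow
      exact hab (pow_eq_zero_iff hd0 |>.mp hpow.symm).symm
    have ha1 : a ≠ 1 := by
      rintro rfl
      rw [sub_self, zero_pow hd1] at hpow1
      have : b - 1 = 0 := pow_eq_zero_iff hd1 |>.mp hpow1.symm
      exact hab (by linear_combination -this)
    have ha1' : a - 1 ≠ 0 := sub_ne_zero.mpr ha1
    set ξ : ℂ := b / a with hξ
    set η : ℂ := (b - 1) / (a - 1) with hη
    have hmem : (ξ, η) ∈ rootPair d := by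
      rw [mem_rootPair hd]
      refine ⟨⟨?_, ?_⟩, ?_, ?_⟩
      · rw [div_pow, ← hpow, div_self (pow_ne_zero _ ha0)]
      · intro h
        exact hab ((div_eq_one_iff_eq ha0).mp h).symm
      · rw [div_pow, ← hpow1, div_self (pow_ne_zero _ ha1')]
      · intro h
        apply hab
        have := (div_eq_one_iff_eq ha1').mp h
        linear_combination -this
    have hne := ne_of_mem_rootPair hd hmem
    have hξη : ξ - η ≠ 0 := sub_ne_zero.mpr hne
    simp only [solT, Finset.mem_image]
    refine ⟨(ξ, η), hmem, ?_⟩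
    have hta : (1 - η) / (ξ - η) = a := by
      rw [div_eq_iff hξη, hξ, hη]
      field_simp
      ring
    simp only [solFn, hta]
    have : ξ * a = b := by rw [hξ]; field_simp
    exact Prod.ext rfl this

lemma injOn_solFn {d : ℕ} (hd : 2 ≤ d) :
    Set.InjOn solFn (rootPair d) := by
  rintro ⟨ξ, η⟩ hp ⟨ξ', η'⟩ hq heq
  simp only [Finset.mem_coe] at hp hq
  have hne := ne_of_mem_rootPair hd hp
  have hne' := ne_of_mem_rootPair hd hq
  rw [mem_rootPair hd] at hp hq
  have hξη : ξ - η ≠ 0 := sub_ne_zero.mpr hne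
  have hξη' : ξ' - η' ≠ 0 := sub_ne_zero.mpr hne'
  have h1η : (1 : ℂ) - η ≠ 0 := sub_ne_zero.mpr (Ne.symm hp.2.2)
  set t : ℂ := (1 - η) / (ξ - η) with ht
  set t' : ℂ := (1 - η') / (ξ' - η') with ht'
  have htt : t = t' ∧ ξ * t = ξ' * t' := by
    simp only [solFn] at heq
    exact ⟨congrArg Prod.fst heq, congrArg Prod.snd heq⟩
  obtain ⟨htt1, htt2⟩ := htt
  have ht0 : t ≠ 0 := div_ne_zero h1η hξη
  have hξξ : ξ = ξ' := by
    rw [← htt1] at htt2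
    exact mul_right_cancel₀ ht0 htt2
  have hteq : t * (ξ - η) = 1 - η := div_mul_cancel₀ _ hξη
  have hteq' : t * (ξ - η') = 1 - η' := by
    rw [htt1, hξξ]; exact div_mul_cancel₀ _ hξη'
  have ht1 : t ≠ 1 := by
    intro h
    rw [h, one_mul] at hteq
    exact hp.1.2 (by linear_combination hteq)
  clear_value t t'
  have hηη : η = η' := by
    have : (η - η') * (1 - t) = 0 := by linear_combination hteq - hteq'
    rcases mul_eq_zero.mp this with h | h
    · exact sub_eq_zero.mp h
    · exact absurd (sub_eq_zero.mp h).symm ht1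
  rw [hξξ, hηη]

lemma card_solT {d : ℕ} (hd : 2 ≤ d) : (solT d).card = (d - 1) * (d - 2) := by
  classical
  have h1 : (solT d).card = (rootPair d).card := by
    rw [solT]
    exact Finset.card_image_of_injOn (injOn_solFn hd)
  have hc1 : ((nthRootsFinset d (1 : ℂ)).erase 1).card = d - 1 := by
    rw [Finset.card_erase_of_mem, (Complex.isPrimitiveRoot_exp d (by omega)).card_nthRootsFinset]
    rw [Polynomial.mem_nthRootsFinset (show 0 < d by omega)]
    exact one_pow d
  have hc2 : ((nthRootsFinset (d - 1) (1 : ℂ)).erase 1).card = d - 2 := by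
    rw [Finset.card_erase_of_mem,
      (Complex.isPrimitiveRoot_exp (d - 1) (by omega)).card_nthRootsFinset]
    · omega
    rw [Polynomial.mem_nthRootsFinset (show 0 < d - 1 by omega)]
    exact one_pow _
  rw [h1, rootPair, Finset.card_product, hc1, hc2]

/-- The number of unordered pairs `{t, s}` of distinct complex numbers with
`φ t = φ s`, where `φ t = (t^d, (t-1)^(d-1))`, is exactly `(d-1)(d-2)/2`. -/
theorem stmt_2 (d : ℕ) (hd : 1 ≤ d) :
    Set.ncard {S : Set ℂ | ∃ t s : ℂ, t ≠ s ∧ S = {t, s} ∧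
        t ^ d = s ^ d ∧ (t - 1) ^ (d - 1) = (s - 1) ^ (d - 1)} =
      (d - 1) * (d - 2) / 2 := by
  classical
  rcases eq_or_lt_of_le hd with h1 | hd2
  · -- d = 1
    have : {S : Set ℂ | ∃ t s : ℂ, t ≠ s ∧ S = {t, s} ∧
        t ^ d = s ^ d ∧ (t - 1) ^ (d - 1) = (s - 1) ^ (d - 1)} = ∅ := by
      ext A
      simp only [Set.mem_setOf_eq, Set.mem_empty_iff_false, iff_false]
      rintro ⟨t, s, hts, -, hpow, -⟩
      rw [← h1, pow_one, pow_one] at hpow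
      exact hts hpow
    rw [this, Set.ncard_empty, ← h1]
  · -- d ≥ 2
    have hd' : 2 ≤ d := hd2
    set Q : Finset (Set ℂ) := (solT d).image (fun p => ({p.1, p.2} : Set ℂ)) with hQ
    have hSQ : {S : Set ℂ | ∃ t s : ℂ, t ≠ s ∧ S = {t, s} ∧
        t ^ d = s ^ d ∧ (t - 1) ^ (d - 1) = (s - 1) ^ (d - 1)} = ↑Q := by
      ext A
      simp only [Set.mem_setOf_eq, Finset.coe_image, Set.mem_image, Finset.mem_coe, hQ]
      constructor
      · rintro ⟨t, s, hts, rfl, hp1, hp2⟩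
        exact ⟨(t, s), (mem_solT hd').mpr ⟨hts, hp1, hp2⟩, rfl⟩
      · rintro ⟨⟨t, s⟩, hmem, rfl⟩
        obtain ⟨hts, hp1, hp2⟩ := (mem_solT hd').mp hmem
        exact ⟨t, s, hts, rfl, hp1, hp2⟩
    rw [hSQ, Set.ncard_coe_finset]
    -- fiberwise count
    have hfib : (solT d).card = ∑ A ∈ Q, ((solT d).filter
        (fun p => ({p.1, p.2} : Set ℂ) = A)).card := by
      exact Finset.card_eq_sum_card_image _ _
    have hfib2 : ∀ A ∈ Q, ((solT d).filter
        (fun p => ({p.1, p.2} : Set ℂ) = A)).card = 2 := by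
      intro A hA
      rw [hQ, Finset.mem_image] at hA
      obtain ⟨⟨a, b⟩, hab, rfl⟩ := hA
      obtain ⟨hne, hp1, hp2⟩ := (mem_solT hd').mp hab
      have hba : (b, a) ∈ solT d := (mem_solT hd').mpr ⟨hne.symm, hp1.symm, hp2.symm⟩
      have hfilter : (solT d).filter (fun p => ({p.1, p.2} : Set ℂ) = {a, b}) =
          {(a, b), (b, a)} := by
        ext ⟨x, y⟩
        simp only [Finset.mem_filter, Finset.mem_insert, Finset.mem_singleton, Prod.mk.injEq]
        constructor
        · rintro ⟨hmem, hpair⟩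
          have hxy := ((mem_solT hd').mp hmem).1
          rcases Set.pair_eq_pair_iff.mp hpair with ⟨h1, h2⟩ | ⟨h1, h2⟩
          · exact Or.inl ⟨h1, h2⟩
          · exact Or.inr ⟨h1, h2⟩
        · rintro (⟨rfl, rfl⟩ | ⟨rfl, rfl⟩)
          · exact ⟨hab, rfl⟩
          · exact ⟨hba, Set.pair_comm x y⟩
      rw [hfilter, Finset.card_insert_of_notMem, Finset.card_singleton]
      simp only [Finset.mem_singleton, Prod.mk.injEq, not_and]
      intro h
      exact absurd h hne
    have htotal : (d - 1) * (d - 2) = 2 * Q.card := by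
      rw [← card_solT hd', hfib, Finset.sum_congr rfl hfib2, Finset.sum_const, smul_eq_mul,
        mul_comm]
    omega
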